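/- For each fixed β ≥ 0 there exist constants C > 0, M > 0 and δ₀ > 0 such that for all α, δ > 0 with δ·α ≥ M and δ ≤ δ₀: if k > 0 satisfies k·(k·sinh(δk) − β·cosh(δk)) = α·(k·cosh(δk) − β·sinh(δk)) and ψ(t) = C₀·((1+β/k)e^{k(t−δ)} + (1−β/k)e^{−k(t−δ)}) with C₀ > 0 chosen so that ∫₀^δ ψ(t)² dt = 1, then |ψ(0)² − 2α| ≤ C·α·e^{−δα}. -/

import Mathlib

set_option maxHeartbeats 4000000

/-- For each fixed `β ≥ 0` there are `C > 0`, `M > 0`, `δ₀ > 0` such that for all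
`α, δ > 0` with `δα ≥ M` and `δ ≤ δ₀`: if `k > 0` solves the secular equation of `T^β`
and `ψ(t) = C₀((1+β/k)e^{k(t−δ)} + (1−β/k)e^{−k(t−δ)})` with `C₀ > 0` normalizing `ψ`
in `L²(0,δ)`, then `|ψ(0)² − 2α| ≤ C·α·e^{−δα}`. -/
theorem robin_robin_eigenfunction_boundary_value_zero (β : ℝ) (hβ : 0 ≤ β) :
    ∃ C > (0:ℝ), ∃ M > (0:ℝ), ∃ δ₀ > (0:ℝ), ∀ α δ : ℝ, 0 < α → 0 < δ →
      M ≤ δ * α → δ ≤ δ₀ →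
      ∀ k C₀ : ℝ, 0 < k →
        k * (k * Real.sinh (δ * k) - β * Real.cosh (δ * k)) =
          α * (k * Real.cosh (δ * k) - β * Real.sinh (δ * k)) →
        0 < C₀ →
        ∀ ψ : ℝ → ℝ,
          ψ = (fun t => C₀ * ((1 + β / k) * Real.exp (k * (t - δ)) +
            (1 - β / k) * Real.exp (-(k * (t - δ))))) →
          (∫ t in (0:ℝ)..δ, ψ t ^ 2) = 1 →
          |ψ 0 ^ 2 - 2 * α| ≤ C * α * Real.exp (-(δ * α)) := by
  refine ⟨576, by norm_num, 2, by norm_num, 1/(1+β)^2, by positivity, ?_⟩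
  intro α δ hα hδ hM hδ₀ k C₀ hk hsec hC₀ ψ hψ hnorm
  set u : ℝ := Real.exp (δ * k) with hu_def
  have hu0 : 0 < u := Real.exp_pos _
  have huu : u * u⁻¹ = 1 := mul_inv_cancel₀ (ne_of_gt hu0)
  have hu1 : 1 < u := by
    rw [hu_def, ← Real.exp_zero]
    exact Real.exp_lt_exp.2 (by positivity)
  -- secular equation in exponential form
  have hsec' : (k^2 + α*β) * (u - u⁻¹) = k*(α+β)*(u + u⁻¹) := by
    rw [Real.sinh_eq, Real.cosh_eq, Real.exp_neg] at hsec
    linear_combination 2 * hsec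
  -- α is large
  have hα2 : 2*(1+β)^2 ≤ α := by
    have h1 : δ * (2*(1+β)^2) ≤ δ * α := by
      calc δ * (2*(1+β)^2) ≤ (1/(1+β)^2) * (2*(1+β)^2) := by
            apply mul_le_mul_of_nonneg_right hδ₀ (by positivity)
        _ = 2 := by field_simp
        _ ≤ δ * α := hM
    exact le_of_mul_le_mul_left h1 hδ
  have hβα : 2*β ≤ α := by nlinarith
  have hα4 : 2 ≤ α := by nlinarith
  -- the product inequality (k-α)(k-β) > 0
  have hui : 0 < u⁻¹ := by positivity
  have huilt : u⁻¹ < 1 := by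
    rw [inv_lt_one_iff₀]; right; exact hu1
  have hprod : k*(α+β) < k^2 + α*β := by
    have hpos : (0:ℝ) < k^2 + α*β := by positivity
    nlinarith [hsec', mul_pos hpos hui, add_pos hu0 hui]
  -- k > α
  have hkα : α < k := by
    by_contra hcon
    push_neg at hcon   -- k ≤ α
    have hkβ : k < β := by nlinarith
    -- small argument regime: δ*k ≤ 1/4
    have hx4 : δ * k ≤ 1/4 := by
      have h1 : δ * k ≤ (1/(1+β)^2) * β := by
        apply mul_le_mul hδ₀ (le_of_lt hkβ) (le_of_lt hk) (by positivity)
      have hq : (1/(1+β)^2) * β ≤ 1/4 := by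
        rw [div_mul_eq_mul_div, div_le_iff₀ (by positivity)]
        nlinarith [sq_nonneg (1-β)]
      linarith
    have hxpos : 0 < δ * k := mul_pos hδ hk
    -- u⁻¹ ≥ 1 - δk  and  u ≤ 1/(1-δk)
    have hlow : 1 - δ*k ≤ u⁻¹ := by
      have := Real.add_one_le_exp (-(δ*k))
      rw [Real.exp_neg, ← hu_def] at this
      linarith
    have hup : u * (1 - δ*k) ≤ 1 := by
      have h34 : (0:ℝ) < 1 - δ*k := by linarith
      nlinarith [huu, mul_pos hu0 h34, mul_le_mul_of_nonneg_right hlow (le_of_lt hu0)]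
    -- u - u⁻¹ ≤ 3 δ k
    have hsinh3 : u - u⁻¹ ≤ 3*(δ*k) := by
      have h34 : (3:ℝ)/4 ≤ 1 - δ*k := by linarith
      nlinarith [hup, hlow, hxpos, mul_pos hxpos hxpos, huu, mul_pos hδ hk]
    -- contradiction: 2 ≤ 3 δ β ≤ 3/4
    have h2u : 2 ≤ u + u⁻¹ := by nlinarith [sq_nonneg (u-1), huu, hu0]
    have hkk : k^2 + α*β ≤ β*(α+β) := by nlinarith
    have hcore : k*(α+β)*2 ≤ β*(α+β)*(3*(δ*k)) := by
      calc k*(α+β)*2 ≤ k*(α+β)*(u+u⁻¹) := by nlinarith [mul_pos hk (show (0:ℝ) < α+β by linarith)]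
        _ = (k^2+α*β)*(u-u⁻¹) := hsec'.symm
        _ ≤ β*(α+β)*(3*(δ*k)) := mul_le_mul hkk hsinh3 (by linarith) (mul_nonneg hβ (by linarith))
    have hδβ : 2 ≤ 3*(δ*β) := by
      have hpos : 0 < k*(α+β) := mul_pos hk (by linarith)
      nlinarith
    have : δ * β ≤ 1/4 := by
      have h1 : δ * β ≤ (1/(1+β)^2) * β := by
        apply mul_le_mul_of_nonneg_right hδ₀ hβ
      have hq : (1/(1+β)^2) * β ≤ 1/4 := by
        rw [div_mul_eq_mul_div, div_le_iff₀ (by positivity)]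
        nlinarith [sq_nonneg (1-β)]
      linarith
    linarith
  have hkβ' : β < k := by nlinarith
  -- gap bound : k - α ≤ 8 k u⁻²
  have hgapid : (k-α)*(k-β)*(u+u⁻¹) = 2*(k^2+α*β)*u⁻¹ := by linear_combination hsec'
  have hgap : k - α ≤ 8*k*(u⁻¹*u⁻¹) := by
    have h1 : (k-α)*(k-β)*u ≤ 2*(k^2+α*β)*u⁻¹ := by
      nlinarith [mul_pos (mul_pos (sub_pos.2 hkα) (sub_pos.2 hkβ')) hui]
    have huu : u * u⁻¹ = 1 := mul_inv_cancel₀ (ne_of_gt hu0)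
    have h2 : (k-α)*(k-β) ≤ 2*(k^2+α*β)*(u⁻¹*u⁻¹) := by
      have := mul_le_mul_of_nonneg_right h1 (le_of_lt hui)
      calc (k-α)*(k-β) = (k-α)*(k-β)*u*u⁻¹ := by rw [mul_assoc, huu]; ring
        _ ≤ 2*(k^2+α*β)*u⁻¹*u⁻¹ := this
        _ = 2*(k^2+α*β)*(u⁻¹*u⁻¹) := by ring
    -- k-β ≥ k/2, k²+αβ ≤ 2k²
    have hb2 : k/2 ≤ k - β := by nlinarith
    have hk2 : k^2 + α*β ≤ 2*k^2 := by nlinarith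
    nlinarith [mul_pos hui hui, mul_pos hk hk, sub_pos.2 hkα]
  -- w = exp(δα), w ≤ u, 7 ≤ w
  set w : ℝ := Real.exp (δ * α) with hw_def
  have hw0 : 0 < w := Real.exp_pos _
  have hwu : w ≤ u := Real.exp_le_exp.2 (by nlinarith)
  have hw7 : 7 ≤ w := by
    have h1 : Real.exp 2 ≤ w := Real.exp_le_exp.2 hM
    have h2 : (2.7:ℝ) < Real.exp 1 := by linarith [Real.exp_one_gt_d9]
    have h3 : Real.exp 2 = Real.exp 1 * Real.exp 1 := by
      rw [← Real.exp_add]; norm_num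
    nlinarith [h2]
  -- k ≤ 2α
  have hwi0 : 0 < w⁻¹ := by positivity
  have hui7 : u⁻¹ ≤ 1/7 := by
    have h1 : u⁻¹ ≤ w⁻¹ := inv_anti₀ hw0 hwu
    have h2 : w⁻¹ ≤ 1/7 := by
      rw [inv_le_iff_one_le_mul₀ hw0]
      linarith
    linarith
  have huiw : u⁻¹ ≤ w⁻¹ := inv_anti₀ hw0 hwu
  have hk2α : k ≤ 2*α := by
    have h3 : u⁻¹*u⁻¹ ≤ 1/49 := by
      have := mul_le_mul hui7 hui7 (le_of_lt hui) (by norm_num : (0:ℝ) ≤ 1/7)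
      linarith
    have h4 : 8*k*(u⁻¹*u⁻¹) ≤ 8*k*(1/49) :=
      mul_le_mul_of_nonneg_left h3 (by positivity)
    linarith [hgap]
  -- abbreviations
  set a : ℝ := 1 + β/k with ha_def
  set b : ℝ := 1 - β/k with hb_def
  have hbk : β/k ≤ 1/2 := by
    rw [div_le_iff₀ hk]; linarith
  have hbk0 : 0 ≤ β/k := div_nonneg hβ (le_of_lt hk)
  have ha1 : 1 ≤ a := by rw [ha_def]; linarith
  have ha2 : a ≤ 3/2 := by rw [ha_def]; linarith
  have hb1 : 1/2 ≤ b := by rw [hb_def]; linarith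
  have hb2 : b ≤ 1 := by rw [hb_def]; linarith
  clear_value a b
  -- the normalization integral
  have hcont : Continuous ψ := by rw [hψ]; continuity
  have hInt : IntervalIntegrable (fun t => ψ t ^ 2) MeasureTheory.volume 0 δ :=
    (hcont.pow 2).intervalIntegrable 0 δ
  have hderiv : ∀ t ∈ Set.uIcc (0:ℝ) δ, HasDerivAt
      (fun t => C₀^2*(a^2/(2*k)*Real.exp (2*k*(t-δ)) + 2*a*b*t - b^2/(2*k)*Real.exp (-(2*k*(t-δ)))))
      (ψ t ^ 2) t := by
    intro t _
    have h1 : HasDerivAt (fun t : ℝ => 2*k*(t-δ)) (2*k) t := by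
      simpa using ((hasDerivAt_id t).sub_const δ).const_mul (2*k)
    have h2 : HasDerivAt (fun t : ℝ => Real.exp (2*k*(t-δ)))
        (Real.exp (2*k*(t-δ)) * (2*k)) t := h1.exp
    have h3 : HasDerivAt (fun t : ℝ => -(2*k*(t-δ))) (-(2*k)) t := h1.neg
    have h4 : HasDerivAt (fun t : ℝ => Real.exp (-(2*k*(t-δ))))
        (Real.exp (-(2*k*(t-δ))) * (-(2*k))) t := h3.exp
    have h5 : HasDerivAt (fun t : ℝ => t) 1 t := hasDerivAt_id t
    have h6 := (((h2.const_mul (a^2/(2*k))).add (h5.const_mul (2*a*b))).sub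
      (h4.const_mul (b^2/(2*k)))).const_mul (C₀^2)
    refine h6.congr_deriv (Eq.symm ?_)
    rw [hψ]
    simp only
    have hE : Real.exp (2*k*(t-δ)) = Real.exp (k*(t-δ)) * Real.exp (k*(t-δ)) := by
      rw [← Real.exp_add]; ring_nf
    have hE2 : Real.exp (-(2*k*(t-δ))) = Real.exp (-(k*(t-δ))) * Real.exp (-(k*(t-δ))) := by
      rw [← Real.exp_add]; ring_nf
    have hE3 : Real.exp (k*(t-δ)) * Real.exp (-(k*(t-δ))) = 1 := by
      rw [← Real.exp_add]
      norm_num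
    rw [hE, hE2]
    field_simp
    linear_combination (2*a*b) * hE3
  have hIeq := intervalIntegral.integral_eq_sub_of_hasDerivAt hderiv hInt
  rw [hnorm] at hIeq
  have e3 : Real.exp (2*k*((0:ℝ)-δ)) = u⁻¹*u⁻¹ := by
    rw [show 2*k*((0:ℝ)-δ) = -(δ*k) + -(δ*k) by ring, Real.exp_add, Real.exp_neg, ← hu_def]
  have e4 : Real.exp (-(2*k*((0:ℝ)-δ))) = u*u := by
    rw [show -(2*k*((0:ℝ)-δ)) = δ*k + δ*k by ring, Real.exp_add, ← hu_def]
  rw [show -((2:ℝ)*k*(δ-δ)) = 0 by ring, show (2:ℝ)*k*(δ-δ) = 0 by ring, Real.exp_zero,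
    e3, e4] at hIeq
  -- cleared form of the normalization
  set q : ℝ := C₀^2 with hq_def
  have hq0 : 0 < q := by positivity
  set J : ℝ := a^2*(1-u⁻¹*u⁻¹) + 4*k*δ*a*b + b^2*(u*u-1) with hJ_def
  have hqJ : q * J = 2*k := by
    have hkinv : k * k⁻¹ = 1 := mul_inv_cancel₀ (ne_of_gt hk)
    rw [hJ_def]
    linear_combination (-(2*k))*hIeq - (q*(a^2*(1-u⁻¹*u⁻¹)+b^2*(u*u-1)))*hkinv
  -- value at 0
  have hψ0 : ψ 0 = C₀*(a*u⁻¹ + b*u) := by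
    rw [hψ]
    simp only
    rw [show -(k*((0:ℝ)-δ)) = δ*k by ring, show k*((0:ℝ)-δ) = -(δ*k) by ring,
      Real.exp_neg, ← hu_def]
  set N : ℝ := (a*u⁻¹ + b*u)^2 with hN_def
  have hψ0sq : ψ 0 ^ 2 = q * N := by rw [hψ0, hq_def, hN_def]; ring
  clear hIeq hderiv hInt hcont hψ hψ0 hnorm hsec hsec'
  clear_value u w q N J
  -- x = δk ≥ 2
  have hx : 2 ≤ δ*k := by
    have h := mul_le_mul_of_nonneg_left hkα.le hδ.le
    linarith
  -- |N - J| ≤ 12 δ k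
  have hcross : u⁻¹ * u = 1 := by rw [mul_comm]; exact huu
  have hNexp : N = a^2*(u⁻¹*u⁻¹) + 2*a*b + b^2*(u*u) := by
    rw [hN_def]
    linear_combination (2*a*b) * hcross
  have hNJ2 : N - J = 2*a^2*(u⁻¹*u⁻¹) + 2*a*b + b^2 - a^2 - 4*k*δ*a*b := by
    rw [hNexp, hJ_def]; ring
  have hab_ub : a*b ≤ 3/2 := by
    have h := mul_le_mul ha2 hb2 (by linarith) (by norm_num : (0:ℝ) ≤ 3/2)
    linarith
  have hab_lb : 1/2 ≤ a*b := by
    have h := mul_le_mul ha1 hb1 (by norm_num) (by linarith : (0:ℝ) ≤ a)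
    linarith
  have huu_ub : u⁻¹*u⁻¹ ≤ 1 := by
    have h := mul_le_mul huilt.le huilt.le hui.le zero_le_one
    linarith
  have huu_nn : (0:ℝ) ≤ u⁻¹*u⁻¹ := by positivity
  have ha2' : a^2 ≤ 9/4 := by
    have h := mul_le_mul ha2 ha2 (by linarith) (by norm_num : (0:ℝ) ≤ 3/2)
    nlinarith only [h]
  have ha1' : 1 ≤ a^2 := by
    have h := mul_le_mul ha1 ha1 zero_le_one (by linarith)
    nlinarith only [h]
  have hb2' : b^2 ≤ 1 := by
    have h := mul_le_mul hb2 hb2 (by linarith) zero_le_one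
    nlinarith only [h]
  have hb1' : 1/4 ≤ b^2 := by
    have h := mul_le_mul hb1 hb1 (by norm_num) (by linarith : (0:ℝ) ≤ b)
    nlinarith only [h]
  have hP1 : (δ*k)*(1/2) ≤ (δ*k)*(a*b) := mul_le_mul_of_nonneg_left hab_lb (by positivity)
  have hP2 : (δ*k)*(a*b) ≤ (δ*k)*(3/2) := mul_le_mul_of_nonneg_left hab_ub (by positivity)
  have hPa : a^2*(u⁻¹*u⁻¹) ≤ (9/4)*1 :=
    mul_le_mul ha2' huu_ub huu_nn (by norm_num)
  have hPa0 : (0:ℝ) ≤ a^2*(u⁻¹*u⁻¹) := by positivity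
  have hNJ : |N - J| ≤ 12*(δ*k) := by
    rw [abs_le]
    constructor
    · nlinarith only [hNJ2, hPa0, hab_lb, hb1', ha2', hP2, hx]
    · nlinarith only [hNJ2, hPa, hab_ub, hb2', ha1', hP1, hx]
  -- lower bound on J
  have hu7 : 7 ≤ u := le_trans hw7 hwu
  have huu49 : 49 ≤ u*u := by
    have h := mul_le_mul hu7 hu7 (by norm_num) (by linarith)
    linarith
  have hJlow : u*u/8 ≤ J := by
    have h1 : 0 ≤ a^2*(1-u⁻¹*u⁻¹) := mul_nonneg (by positivity) (by linarith)
    have h2 : 0 ≤ 4*k*δ*a*b :=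
      mul_nonneg (mul_nonneg (mul_nonneg (by positivity) hδ.le) (by linarith)) (by linarith)
    have h3 : (1/4)*(u*u-1) ≤ b^2*(u*u-1) :=
      mul_le_mul_of_nonneg_right hb1' (by linarith)
    rw [hJ_def]
    linarith
  have huu2 : (u*u)*(u⁻¹*u⁻¹) = 1 := by linear_combination (u*u⁻¹+1)*huu
  have hquu : q*(u*u) ≤ 16*k := by
    have h := mul_le_mul_of_nonneg_left hJlow hq0.le
    linarith only [h, hqJ]
  have hqb : q ≤ 16*k*(u⁻¹*u⁻¹) := by
    have h := mul_le_mul_of_nonneg_right hquu huu_nn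
    calc q = q*((u*u)*(u⁻¹*u⁻¹)) := by rw [huu2, mul_one]
      _ = q*(u*u)*(u⁻¹*u⁻¹) := by ring
      _ ≤ 16*k*(u⁻¹*u⁻¹) := h
  -- δk ≤ u
  have hδku : δ*k ≤ u := by
    have := Real.add_one_le_exp (δ*k)
    rw [← hu_def] at this
    linarith
  have hwi0 : 0 < w⁻¹ := by positivity
  -- main bound around 2k
  have habs1 : |ψ 0 ^ 2 - 2*k| ≤ 384*α*w⁻¹ := by
    rw [hψ0sq]
    have h1 : q*N - 2*k = q*(N-J) := by linear_combination hqJ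
    rw [h1, abs_mul, abs_of_pos hq0]
    calc q*|N-J| ≤ (16*k*(u⁻¹*u⁻¹))*(12*(δ*k)) :=
          mul_le_mul hqb hNJ (abs_nonneg _) (by positivity)
      _ = 192*k*(δ*k)*(u⁻¹*u⁻¹) := by ring
      _ ≤ 192*k*u*(u⁻¹*u⁻¹) := by
          have h := mul_le_mul_of_nonneg_left hδku (by positivity : (0:ℝ) ≤ 192*k*(u⁻¹*u⁻¹))
          linarith only [h]
      _ = 192*k*u⁻¹ := by linear_combination (192*k*u⁻¹)*huu
      _ ≤ 384*α*w⁻¹ := by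
          have h2 := mul_le_mul_of_nonneg_right hk2α hui.le
          have h3 := mul_le_mul_of_nonneg_left huiw (by positivity : (0:ℝ) ≤ 384*α)
          linarith only [h2, h3]
  -- gap bound
  have hgap2 : 2*k - 2*α ≤ 32*α*w⁻¹ := by
    have h1 := mul_le_mul_of_nonneg_right hk2α huu_nn
    have h2 : u⁻¹*u⁻¹ ≤ w⁻¹*1 := mul_le_mul huiw huilt.le hui.le hwi0.le
    have h3 := mul_le_mul_of_nonneg_left h2 (by positivity : (0:ℝ) ≤ 16*α)
    linarith only [hgap, h1, h3]
  -- conclusion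
  have hwgoal : Real.exp (-(δ*α)) = w⁻¹ := by rw [Real.exp_neg, ← hw_def]
  rw [hwgoal]
  have hA := abs_le.1 habs1
  rw [abs_le]
  have hαw : 0 < α*w⁻¹ := mul_pos hα hwi0
  constructor
  · linarith only [hA.1, hkα, hαw]
  · linarith only [hA.2, hgap2, hαw]
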